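/- Let f be proper closed convex with nonempty solution set S, and {c_k} positive. The proximal point iterates x_{k+1} = prox_{c_k,f}(x_k) satisfy f(x_k) − f⋆ ≤ dist²(x_0, S)/(2·∑_{t=0}^{k−1} c_t). -/

import Mathlib

open Metric Set Filter

local notation "⟪" x ", " y "⟫_ℝ" => @inner ℝ _ _ x y

noncomputable section

abbrev En (n : ℕ) := EuclideanSpace ℝ (Fin n)

def frechetSubdiff {n : ℕ} (f : En n → ℝ) (x : En n) : Set (En n) :=
  {s | ∀ ε > 0, ∀ᶠ y in nhds x, f x + ⟪s, y - x⟫_ℝ - ε * ‖y - x‖ ≤ f y}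

def convexSubdiff {n : ℕ} (f : En n → ℝ) (x : En n) : Set (En n) :=
  {g | ∀ y, f x + ⟪g, y - x⟫_ℝ ≤ f y}

lemma ppm_aux_limit (a b K : ℝ) (hK : 0 ≤ K)
    (h : ∀ l : ℝ, 0 < l → l ≤ 1 → a ≤ b + l * K) : a ≤ b := by
  refine le_of_forall_pos_le_add fun ε hε => ?_
  rcases le_or_gt K ε with h1 | h1
  · have := h 1 one_pos le_rfl; linarith
  · have hKpos : 0 < K := hε.trans h1
    have hl : 0 < ε / K := div_pos hε hKpos
    have hle : ε / K ≤ 1 := le_of_lt ((div_lt_one hKpos).mpr h1)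
    have := h (ε / K) hl hle
    have : a ≤ b + ε / K * K := this
    rw [div_mul_cancel₀ _ (ne_of_gt hKpos)] at this
    linarith

lemma ppm_key {n : ℕ} (f : En n → ℝ) (hconv : ConvexOn ℝ Set.univ f)
    (c : ℝ) (hc : 0 < c) (w u : En n)
    (h : ∀ z, f u + 1 / (2 * c) * ‖u - w‖ ^ 2 ≤ f z + 1 / (2 * c) * ‖z - w‖ ^ 2) :
    ∀ z, 2 * c * (f u - f z) ≤ ‖z - w‖ ^ 2 - ‖z - u‖ ^ 2 := by
  intro z
  set I : ℝ := ⟪u - w, z - u⟫_ℝ with hI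
  have hmain : f u ≤ f z + I / c := by
    refine ppm_aux_limit _ _ (‖z - u‖ ^ 2 / (2 * c))
      (div_nonneg (sq_nonneg _) (by linarith)) fun l hl hl1 => ?_
    have hzl := h (u + l • (z - u))
    have hcvx : f (u + l • (z - u)) ≤ (1 - l) * f u + l * f z := by
      have := hconv.2 (Set.mem_univ u) (Set.mem_univ z) (by linarith : (0:ℝ) ≤ 1 - l)
        (le_of_lt hl) (by ring)
      have heq : (1 - l) • u + l • z = u + l • (z - u) := by
        simp [smul_sub, sub_smul]; abel
      rw [heq] at this
      simpa [smul_eq_mul] using this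
    have hnorm : ‖u + l • (z - u) - w‖ ^ 2
        = ‖u - w‖ ^ 2 + 2 * (l * I) + l ^ 2 * ‖z - u‖ ^ 2 := by
      have heq : u + l • (z - u) - w = (u - w) + l • (z - u) := by abel
      rw [heq, norm_add_sq_real, real_inner_smul_right, norm_smul, mul_pow,
        Real.norm_eq_abs, sq_abs]
    rw [hnorm] at hzl
    have hc' : 0 < 2 * c := by linarith
    have key : l * f u ≤ l * f z + 1 / (2 * c) * (2 * (l * I) + l ^ 2 * ‖z - u‖ ^ 2) := by
      nlinarith [hzl, hcvx]
    have hrw : l * f z + 1 / (2 * c) * (2 * (l * I) + l ^ 2 * ‖z - u‖ ^ 2)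
        = l * (f z + I / c + l * (‖z - u‖ ^ 2 / (2 * c))) := by
      field_simp
      ring
    rw [hrw] at key
    have := (mul_le_mul_iff_right₀ hl).mp key
    linarith
  have hexp : ‖z - w‖ ^ 2 = ‖z - u‖ ^ 2 + 2 * I + ‖u - w‖ ^ 2 := by
    have heq : z - w = (z - u) + (u - w) := by abel
    rw [heq, norm_add_sq_real, hI, real_inner_comm]
  have hIc : f u - f z ≤ I / c := by linarith
  have : c * (f u - f z) ≤ I := by
    have := (div_le_div_iff_of_pos_right hc).mpr hIc
    calc c * (f u - f z) ≤ c * (I / c) := by nlinarith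
    _ = I := by field_simp
  nlinarith [sq_nonneg ‖u - w‖]

/-- Sublinear convergence of the proximal point method:
f(x_k) − f⋆ ≤ dist²(x_0,S)/(2∑_{t<k} c_t). -/
theorem ppm_sublinear_convergence {n : ℕ} (f : En n → ℝ) (fstar : ℝ)
    (hlsc : LowerSemicontinuous f) (hconv : ConvexOn ℝ Set.univ f)
    (hlb : ∀ y, fstar ≤ f y)
    (S : Set (En n)) (hS : S = {x | f x = fstar}) (hne : S.Nonempty)
    (c : ℕ → ℝ) (hc : ∀ k, 0 < c k)
    (x : ℕ → En n)
    (hiter : ∀ k z, f (x (k + 1)) + 1 / (2 * c k) * ‖x (k + 1) - x k‖ ^ 2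
      ≤ f z + 1 / (2 * c k) * ‖z - x k‖ ^ 2) :
    ∀ k, 0 < k →
      f (x k) - fstar ≤ (infDist (x 0) S) ^ 2 / (2 * ∑ t ∈ Finset.range k, c t) := by
  -- key one-step inequality
  have key : ∀ k z, 2 * c k * (f (x (k + 1)) - f z)
      ≤ ‖z - x k‖ ^ 2 - ‖z - x (k + 1)‖ ^ 2 :=
    fun k z => ppm_key f hconv (c k) (hc k) (x k) (x (k + 1)) (hiter k) z
  -- monotonicity
  have mono_step : ∀ k, f (x (k + 1)) ≤ f (x k) := by
    intro k
    have := hiter k (x k)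
    have hpos : 0 < 1 / (2 * c k) := by
      have := hc k; positivity
    have h0 : ‖x k - x k‖ ^ 2 = 0 := by simp
    nlinarith [mul_nonneg hpos.le (sq_nonneg ‖x (k + 1) - x k‖)]
  have mono : ∀ m l, m ≤ l → f (x l) ≤ f (x m) := by
    intro m l hml
    induction l with
    | zero => simp_all
    | succ l ih =>
      rcases Nat.lt_or_ge m (l + 1) with h | h
      · exact (mono_step l).trans (ih (Nat.lt_succ_iff.mp h))
      · have : m = l + 1 := le_antisymm hml h
        simp [this]
  -- telescoped inequality for any z ∈ S
  have tele : ∀ z ∈ S, ∀ k,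
      2 * (∑ t ∈ Finset.range k, c t) * (f (x k) - fstar)
        ≤ ‖z - x 0‖ ^ 2 - ‖z - x k‖ ^ 2 := by
    intro z hz k
    have hfz : f z = fstar := by rw [hS] at hz; exact hz
    induction k with
    | zero => simp
    | succ k ih =>
      have hsum : (0:ℝ) ≤ ∑ t ∈ Finset.range k, c t :=
        Finset.sum_nonneg fun t _ => (hc t).le
      have h1 := key k z
      rw [hfz] at h1
      have h2 : f (x (k + 1)) ≤ f (x k) := mono_step k
      have h3 : fstar ≤ f (x (k + 1)) := hlb _
      rw [Finset.sum_range_succ]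
      nlinarith [ih]
  intro k hk
  set C : ℝ := ∑ t ∈ Finset.range k, c t with hC
  have hCpos : 0 < C := Finset.sum_pos (fun t _ => hc t) ⟨0, Finset.mem_range.mpr hk⟩
  set A : ℝ := f (x k) - fstar with hA
  have hA0 : 0 ≤ A := sub_nonneg.mpr (hlb _)
  have hfinal : 2 * C * A ≤ (infDist (x 0) S) ^ 2 := by
    set b : ℝ := Real.sqrt (2 * C * A) with hb
    have hb2 : b ^ 2 = 2 * C * A := Real.sq_sqrt (by positivity)
    have hble : b ≤ infDist (x 0) S := by
      by_contra hlt
      push_neg at hlt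
      obtain ⟨z, hz, hdz⟩ := (infDist_lt_iff hne).mp hlt
      refine absurd hdz (not_lt.mpr ?_)
      have h1 : 2 * C * A ≤ ‖z - x 0‖ ^ 2 := by
        have := tele z hz k
        nlinarith [sq_nonneg ‖z - x k‖]
      have h2 : dist (x 0) z = ‖z - x 0‖ := by
        rw [dist_eq_norm, norm_sub_rev]
      calc b ≤ Real.sqrt (‖z - x 0‖ ^ 2) := Real.sqrt_le_sqrt h1
        _ = ‖z - x 0‖ := Real.sqrt_sq (norm_nonneg _)
        _ = dist (x 0) z := h2.symm
    calc 2 * C * A = b ^ 2 := hb2.symm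
      _ ≤ (infDist (x 0) S) ^ 2 := by
          apply pow_le_pow_left₀ (Real.sqrt_nonneg _) hble
  rw [le_div_iff₀ (by positivity : (0:ℝ) < 2 * C)]
  linarith
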